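/- With the M₆(μ) action above (m_k·x = μ₁ m_{k+1 mod l}, m_k·y = μ₁⁻¹((q^{2k}μ₂−α)/(q²−1)) m_{k−1 mod l}, m_k·z = 0), each m_k is an eigenvector of the operator of yx with eigenvalue (q^{2k}μ₂ − α)/(q²−1), and these l eigenvalues are pairwise distinct; consequently any nonzero subspace of M₆(μ) invariant under x, y, z contains some basis vector m_k and hence equals M₆(μ), so M₆(μ) is a simple module of dimension l. -/

import Mathlib

noncomputable section

/-- The matrix (row `k` = expansion of `m_k·x`) of the action of `x` on `M₆(μ)`:
`m_k·x = μ₁ m_{k+1 mod l}`. -/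
def M6X {K : Type} [Field K] (μ₁ : K) (l : ℕ) [NeZero l] : Matrix (Fin l) (Fin l) K :=
  Matrix.of fun k j => if j = k + 1 then μ₁ else 0

/-- The matrix of the action of `y` on `M₆(μ)`:
`m_k·y = μ₁⁻¹ ((q^{2k}μ₂ - α)/(q²-1)) m_{k-1 mod l}`. -/
def M6Y {K : Type} [Field K] (q α μ₁ μ₂ : K) (l : ℕ) [NeZero l] : Matrix (Fin l) (Fin l) K :=
  Matrix.of fun k j =>
    if j = k - 1 then μ₁⁻¹ * ((q ^ (2 * (k : ℕ)) * μ₂ - α) / (q ^ 2 - 1)) else 0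

/-- The matrix of the action of `z` on `M₆(μ)`: `m_k·z = 0`. -/
def M6Z {K : Type} [Field K] (l : ℕ) : Matrix (Fin l) (Fin l) K := 0

/-- A nonzero subspace invariant under coordinatewise multiplication by an injective
diagonal contains a standard basis vector. -/
private lemma diag_single {K : Type} [Field K] {n : ℕ} (d : Fin n → K)
    (hd : Function.Injective d) (W : Submodule K (Fin n → K))
    (hW : ∀ v ∈ W, (fun i => v i * d i) ∈ W) :
    ∀ (s : Finset (Fin n)) (v : Fin n → K), v ∈ W → v ≠ 0 →
      (∀ i, v i ≠ 0 → i ∈ s) → ∃ k, (Pi.single k 1 : Fin n → K) ∈ W := by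
  intro s
  induction s using Finset.strongInduction with
  | _ s ih =>
    intro v hvW hv hsupp
    obtain ⟨i, hi⟩ : ∃ i, v i ≠ 0 := by
      by_contra h; push_neg at h; exact hv (funext fun i => h i)
    by_cases hone : ∀ j, v j ≠ 0 → j = i
    · refine ⟨i, ?_⟩
      have h2 : (Pi.single i 1 : Fin n → K) = (v i)⁻¹ • v := by
        funext j
        by_cases hj : j = i
        · subst hj; simp [inv_mul_cancel₀ hi]
        · have hz : v j = 0 := by
            by_contra h; exact hj (hone j h)
          simp [Pi.single_apply, hj, hz]
      rw [h2]; exact W.smul_mem _ hvW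
    · push_neg at hone
      obtain ⟨j, hj, hji⟩ := hone
      have hdij : d i ≠ d j := fun h => hji (hd h).symm
      set w : Fin n → K := fun x => v x * d x - d j * v x with hw
      have hwW : w ∈ W := by
        have h1 : (fun x => v x * d x) - (d j) • v ∈ W :=
          W.sub_mem (hW v hvW) (W.smul_mem _ hvW)
        convert h1 using 1
        rw [hw]; rfl
      have hwi : w i ≠ 0 := by
        have : w i = v i * (d i - d j) := by simp [hw]; ring
        rw [this]
        exact mul_ne_zero hi (sub_ne_zero.2 fun h => hdij h)
      have hwne : w ≠ 0 := fun h => hwi (by rw [h]; rfl)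
      have hwj : w j = 0 := by simp [hw]; ring
      refine ih (s.erase j) ?_ w hwW hwne ?_
      · exact Finset.erase_ssubset (hsupp j hj)
      · intro x hx
        refine Finset.mem_erase.2 ⟨?_, ?_⟩
        · intro h; exact hx (h ▸ hwj)
        · apply hsupp
          intro h
          apply hx
          simp [hw, h]

/-- For the `M₆(μ)` action, each `m_k` is an eigenvector of the operator of `yx` with
eigenvalue `(q^{2k}μ₂ - α)/(q²-1)`; these `l` eigenvalues are pairwise distinct;
consequently every nonzero subspace of `M₆(μ)` invariant under the (right) actions of
`x`, `y`, `z` contains a basis vector `m_k` and equals all of `M₆(μ)`; so `M₆(μ)` is a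
simple module of dimension `l`. -/
theorem stmt17 {K : Type} [Field K] (q : K) (l : ℕ) [NeZero l] (hl : 1 < l)
    (hq : IsPrimitiveRoot (q ^ 2) l) (α μ₁ μ₂ : K) (hα : α ≠ 0) (hμ₁ : μ₁ ≠ 0)
    (hμ₂ : μ₂ ≠ 0) :
    M6Y q α μ₁ μ₂ l * M6X μ₁ l =
        Matrix.diagonal (fun k : Fin l => (q ^ (2 * (k : ℕ)) * μ₂ - α) / (q ^ 2 - 1)) ∧
    (Function.Injective fun k : Fin l => (q ^ (2 * (k : ℕ)) * μ₂ - α) / (q ^ 2 - 1)) ∧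
    (∀ W : Submodule K (Fin l → K),
      (∀ v ∈ W, Matrix.vecMul v (M6X μ₁ l) ∈ W) →
      (∀ v ∈ W, Matrix.vecMul v (M6Y q α μ₁ μ₂ l) ∈ W) →
      (∀ v ∈ W, Matrix.vecMul v (M6Z l : Matrix (Fin l) (Fin l) K) ∈ W) →
      W ≠ ⊥ → (∃ k : Fin l, (Pi.single k 1 : Fin l → K) ∈ W) ∧ W = ⊤) ∧
    Module.finrank K (Fin l → K) = l := by
  have hq1 : (q : K) ^ 2 ≠ 1 := hq.ne_one hl
  have hq0 : (q : K) ^ 2 - 1 ≠ 0 := sub_ne_zero.2 hq1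
  set c : Fin l → K := fun k => (q ^ (2 * (k : ℕ)) * μ₂ - α) / (q ^ 2 - 1) with hc
  -- part 1 : the product is diagonal
  have hprod : M6Y q α μ₁ μ₂ l * M6X μ₁ l = Matrix.diagonal c := by
    ext k j
    rw [Matrix.mul_apply]
    rw [Finset.sum_eq_single (k - 1)]
    · rw [show (M6X μ₁ l) (k - 1) j = if j = k then μ₁ else 0 by
        simp [M6X, sub_add_cancel]]
      by_cases h : j = k
      · subst h
        rw [if_pos rfl, Matrix.diagonal_apply_eq]
        simp only [M6Y, Matrix.of_apply, if_pos rfl, hc, ↓reduceIte]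
        field_simp
      · rw [if_neg h, mul_zero, Matrix.diagonal_apply_ne _ fun hh => h hh.symm]
    · intro b _ hb
      simp [M6Y, Matrix.of_apply, hb]
    · intro h; exact absurd (Finset.mem_univ _) h
  -- part 2 : injectivity
  have hinj : Function.Injective c := by
    intro a b hab
    simp only [hc] at hab
    rw [div_eq_div_iff hq0 hq0] at hab
    have h1 := mul_right_cancel₀ hq0 hab
    have h2 : q ^ (2 * (a : ℕ)) = q ^ (2 * (b : ℕ)) := by
      have := sub_left_inj.1 h1
      exact mul_right_cancel₀ hμ₂ this
    have h3 : (q ^ 2) ^ (a : ℕ) = (q ^ 2) ^ (b : ℕ) := by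
      rw [← pow_mul, ← pow_mul]
      exact h2
    exact Fin.ext (hq.pow_inj a.2 b.2 h3)
  refine ⟨hprod, hinj, ?_, Module.finrank_fin_fun K⟩
  intro W hX hY _ hbot
  -- W is invariant under the diagonal operator
  have hDiag : ∀ v ∈ W, (fun i => v i * c i) ∈ W := by
    intro v hv
    have h1 : Matrix.vecMul (Matrix.vecMul v (M6Y q α μ₁ μ₂ l)) (M6X μ₁ l) ∈ W :=
      hX _ (hY v hv)
    rw [Matrix.vecMul_vecMul, hprod] at h1
    convert h1 using 1
    funext i
    rw [Matrix.vecMul_diagonal]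
  obtain ⟨v, hvW, hv0⟩ := (Submodule.ne_bot_iff W).1 hbot
  obtain ⟨k, hk⟩ := diag_single c hinj W hDiag Finset.univ v hvW hv0 (fun i _ => Finset.mem_univ i)
  refine ⟨⟨k, hk⟩, ?_⟩
  -- shifting: from single k 1 get all singles
  have hstep : ∀ a : Fin l, (Pi.single a 1 : Fin l → K) ∈ W →
      (Pi.single (a + 1) 1 : Fin l → K) ∈ W := by
    intro a ha
    have h1 := hX _ ha
    rw [Matrix.single_one_vecMul] at h1
    have h2 : (M6X μ₁ l) a = μ₁ • (Pi.single (a + 1) 1 : Fin l → K) := by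
      funext j
      simp [M6X, Pi.single_apply]
    change (M6X μ₁ l) a ∈ W at h1
    rw [h2] at h1
    have := W.smul_mem μ₁⁻¹ h1
    rwa [smul_smul, inv_mul_cancel₀ hμ₁, one_smul] at this
  open Fin.NatCast Fin.CommRing in
  have hall : ∀ m : ℕ, (Pi.single (k + (m : Fin l)) 1 : Fin l → K) ∈ W := by
    intro m
    induction m with
    | zero => simpa using hk
    | succ n ihn =>
        have h := hstep _ ihn
        have he : (((n+1 : ℕ)) : Fin l) = ((n : ℕ) : Fin l) + 1 := by push_cast; ring
        rw [show (k + (((n+1:ℕ)) : Fin l)) = k + ((n : ℕ) : Fin l) + 1 by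
          rw [he, add_assoc]]
        exact h
  open Fin.NatCast Fin.CommRing in
  have hsingles : ∀ j : Fin l, (Pi.single j 1 : Fin l → K) ∈ W := by
    intro j
    have := hall ((j - k).val)
    rwa [Fin.cast_val_eq_self, add_sub_cancel] at this
  rw [eq_top_iff, ← (Pi.basisFun K (Fin l)).span_eq]
  rw [Submodule.span_le]
  rintro x ⟨i, rfl⟩
  rw [Pi.basisFun_apply]
  exact hsingles i
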